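/- For ξ, η ∈ ℝ² with ξ, η, ξ−η all nonzero and γ₂ ∈ (0,2), the algebraic identity i(ξ−η)_l/|ξ−η|^{γ₂} + iη_l/|η|^{γ₂} = iξ_l/|ξ−η|^{γ₂} + Σ_{m=1}^{2} iξ_m · (iη_l/|η|^{γ₂}) · (1/|ξ−η|^{γ₂}) · γ₂ s^m(ξ−η, η) holds, where s^m(λ,η) := ∫₀¹ i((1−r)η − rλ)_m / |(1−r)η − rλ|^{2−γ₂} dr (assuming (1−r)η − rλ ≠ 0 for all r ∈ [0,1]). -/

import Mathlib

/-- The components of a vector in ℝ². -/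
def comp2 (v : ℝ × ℝ) : Fin 2 → ℝ := ![v.1, v.2]

/-- The Euclidean norm `|v|` on ℝ². -/
noncomputable def norv (v : ℝ × ℝ) : ℝ := Real.sqrt (v.1 ^ 2 + v.2 ^ 2)

/-- `s^m(λ,η) = ∫₀¹ i((1−r)η − rλ)_m / |(1−r)η − rλ|^{2−γ₂} dr`. -/
noncomputable def sm (γ₂ : ℝ) (m : Fin 2) (lam η : ℝ × ℝ) : ℂ :=
  ∫ r in (0:ℝ)..1,
    Complex.I * (comp2 ((1 - r) • η - r • lam) m : ℂ)
      / (Real.rpow (norv ((1 - r) • η - r • lam)) (2 - γ₂) : ℂ)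

/-- For `ξ, η ∈ ℝ²` with `ξ, η, ξ−η` nonzero, `γ₂ ∈ (0,2)` and the segment
`(1−r)η − r(ξ−η)` avoiding the origin:
`i(ξ−η)_l/|ξ−η|^{γ₂} + iη_l/|η|^{γ₂}`
`= iξ_l/|ξ−η|^{γ₂} + Σ_m iξ_m (iη_l/|η|^{γ₂}) (1/|ξ−η|^{γ₂}) γ₂ s^m(ξ−η, η)`. -/
theorem stmt11 (γ₂ : ℝ) (h0 : 0 < γ₂) (h2 : γ₂ < 2) (ξ η : ℝ × ℝ)
    (hξ : ξ ≠ 0) (hη : η ≠ 0) (hξη : ξ - η ≠ 0)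
    (hseg : ∀ r ∈ Set.Icc (0:ℝ) 1, (1 - r) • η - r • (ξ - η) ≠ 0) (l : Fin 2) :
    Complex.I * (comp2 (ξ - η) l : ℂ) / (Real.rpow (norv (ξ - η)) γ₂ : ℂ)
      + Complex.I * (comp2 η l : ℂ) / (Real.rpow (norv η) γ₂ : ℂ)
    = Complex.I * (comp2 ξ l : ℂ) / (Real.rpow (norv (ξ - η)) γ₂ : ℂ)
      + ∑ m : Fin 2, Complex.I * (comp2 ξ m : ℂ)
          * (Complex.I * (comp2 η l : ℂ) / (Real.rpow (norv η) γ₂ : ℂ))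
          * (1 / (Real.rpow (norv (ξ - η)) γ₂ : ℂ)) * (γ₂ : ℂ) * sm γ₂ m (ξ - η) η := by
  simp only [Real.rpow_eq_pow]
  set g : ℝ → ℝ := fun r => (η.1 - r*ξ.1)^2 + (η.2 - r*ξ.2)^2 with hgdef
  have hveq : ∀ r : ℝ, (1 - r) • η - r • (ξ - η) = (η.1 - r*ξ.1, η.2 - r*ξ.2) := by
    intro r
    ext <;> simp [Prod.smul_fst, Prod.smul_snd, smul_eq_mul] <;> ring
  have hg_pos : ∀ r ∈ Set.Icc (0:ℝ) 1, 0 < g r := by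
    intro r hr
    have hv := hseg r hr
    rw [hveq r] at hv
    have : η.1 - r*ξ.1 ≠ 0 ∨ η.2 - r*ξ.2 ≠ 0 := by
      by_contra h
      push_neg at h
      exact hv (by simp [Prod.ext_iff, h.1, h.2])
    rcases this with h | h
    · exact add_pos_of_pos_of_nonneg
        (lt_of_le_of_ne (sq_nonneg _) (Ne.symm (pow_ne_zero 2 h))) (sq_nonneg _)
    · exact add_pos_of_nonneg_of_pos (sq_nonneg _)
        (lt_of_le_of_ne (sq_nonneg _) (Ne.symm (pow_ne_zero 2 h)))
  have hnorv : ∀ r : ℝ, norv ((1 - r) • η - r • (ξ - η)) = Real.sqrt (g r) := by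
    intro r; rw [hveq r]; rfl
  have hden : ∀ r ∈ Set.Icc (0:ℝ) 1, ∀ w : ℝ,
      w / (Real.sqrt (g r)) ^ (2 - γ₂ : ℝ) = w * (g r) ^ (γ₂/2 - 1 : ℝ) := by
    intro r hr w
    have hgr := hg_pos r hr
    rw [Real.sqrt_eq_rpow, ← Real.rpow_mul hgr.le, div_eq_mul_inv, ← Real.rpow_neg hgr.le]
    congr 1
    ring
  set J : Fin 2 → ℝ := fun m =>
    ∫ r in (0:ℝ)..1, (![η.1 - r*ξ.1, η.2 - r*ξ.2] m) * (g r) ^ (γ₂/2 - 1 : ℝ) with hJdef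
  have hsm : ∀ m : Fin 2, sm γ₂ m (ξ - η) η = Complex.I * (J m : ℂ) := by
    intro m
    rw [hJdef]
    unfold sm
    rw [← intervalIntegral.integral_ofReal, ← intervalIntegral.integral_const_mul]
    apply intervalIntegral.integral_congr
    intro r hr
    rw [Set.uIcc_of_le zero_le_one] at hr
    have hc2 : comp2 ((1 - r) • η - r • (ξ - η)) m = ![η.1 - r*ξ.1, η.2 - r*ξ.2] m := by
      rw [hveq r]; fin_cases m <;> simp [comp2]
    dsimp only
    rw [hc2, hnorv r, Real.rpow_eq_pow, mul_div_assoc, ← Complex.ofReal_div, hden r hr]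
  have hderiv : ∀ r ∈ Set.uIcc (0:ℝ) 1,
      HasDerivAt (fun r => g r ^ (γ₂/2 : ℝ))
        (-γ₂ * (ξ.1 * (η.1 - r*ξ.1) + ξ.2 * (η.2 - r*ξ.2)) * g r ^ (γ₂/2 - 1 : ℝ)) r := by
    intro r hr
    rw [Set.uIcc_of_le zero_le_one] at hr
    have h1 : HasDerivAt (fun r : ℝ => η.1 - r*ξ.1) (-ξ.1) r := by
      simpa using ((hasDerivAt_mul_const ξ.1).const_sub η.1)
    have h2' : HasDerivAt (fun r : ℝ => η.2 - r*ξ.2) (-ξ.2) r := by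
      simpa using ((hasDerivAt_mul_const ξ.2).const_sub η.2)
    have hg : HasDerivAt g (2*(η.1 - r*ξ.1)*(-ξ.1) + 2*(η.2 - r*ξ.2)*(-ξ.2)) r := by
      simpa [hgdef] using ((h1.fun_pow 2).fun_add (h2'.fun_pow 2))
    have := hg.rpow_const (p := γ₂/2) (Or.inl (ne_of_gt (hg_pos r hr)))
    convert this using 1
    ring
  have hcontw : ∀ m : Fin 2, ContinuousOn
      (fun r => (![η.1 - r*ξ.1, η.2 - r*ξ.2] m) * (g r) ^ (γ₂/2 - 1 : ℝ))
      (Set.uIcc (0:ℝ) 1) := by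
    intro m
    rw [Set.uIcc_of_le zero_le_one]
    apply ContinuousOn.mul
    · fin_cases m <;> simp <;> fun_prop
    · exact ContinuousOn.rpow_const (by fun_prop) (fun r hr => Or.inl (ne_of_gt (hg_pos r hr)))
  have hFTC : ∫ r in (0:ℝ)..1,
      (-γ₂ * (ξ.1 * (η.1 - r*ξ.1) + ξ.2 * (η.2 - r*ξ.2)) * (g r) ^ (γ₂/2 - 1 : ℝ))
      = g 1 ^ (γ₂/2 : ℝ) - g 0 ^ (γ₂/2 : ℝ) := by
    have hcont : ContinuousOn (fun r =>
        -γ₂ * (ξ.1 * (η.1 - r*ξ.1) + ξ.2 * (η.2 - r*ξ.2)) * g r ^ (γ₂/2 - 1 : ℝ))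
        (Set.uIcc (0:ℝ) 1) := by
      rw [Set.uIcc_of_le zero_le_one]
      apply ContinuousOn.mul
      · fun_prop
      · exact ContinuousOn.rpow_const (by fun_prop) (fun r hr => Or.inl (ne_of_gt (hg_pos r hr)))
    simpa using intervalIntegral.integral_eq_sub_of_hasDerivAt hderiv hcont.intervalIntegrable
  have i0 : IntervalIntegrable (fun r => (η.1 - r*ξ.1) * (g r) ^ (γ₂/2 - 1 : ℝ))
      MeasureTheory.volume 0 1 := by
    simpa using (hcontw 0).intervalIntegrable
  have i1 : IntervalIntegrable (fun r => (η.2 - r*ξ.2) * (g r) ^ (γ₂/2 - 1 : ℝ))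
      MeasureTheory.volume 0 1 := by
    simpa using (hcontw 1).intervalIntegrable
  have hsplit : ∫ r in (0:ℝ)..1,
      (-γ₂ * (ξ.1 * (η.1 - r*ξ.1) + ξ.2 * (η.2 - r*ξ.2)) * (g r) ^ (γ₂/2 - 1 : ℝ))
      = -γ₂ * ξ.1 * J 0 + -γ₂ * ξ.2 * J 1 := by
    rw [hJdef]
    simp only [Matrix.cons_val_zero, Matrix.cons_val_one, Matrix.head_cons]
    rw [← intervalIntegral.integral_const_mul, ← intervalIntegral.integral_const_mul,
      ← intervalIntegral.integral_add (i0.const_mul _) (i1.const_mul _)]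
    apply intervalIntegral.integral_congr
    intro r _
    dsimp only
    ring
  set A : ℝ := (norv (ξ - η)) ^ γ₂ with hAdef
  set B : ℝ := (norv η) ^ γ₂ with hBdef
  have hg0eq : g 0 = η.1^2 + η.2^2 := by simp [hgdef]
  have hg1eq : g 1 = (ξ - η).1^2 + (ξ - η).2^2 := by
    simp [hgdef, Prod.fst_sub, Prod.snd_sub]; ring
  have hg0 : (0:ℝ) < η.1^2 + η.2^2 := hg0eq ▸ hg_pos 0 (by norm_num)
  have hg1 : (0:ℝ) < (ξ - η).1^2 + (ξ - η).2^2 := hg1eq ▸ hg_pos 1 (by norm_num)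
  have hB : B = g 0 ^ (γ₂/2 : ℝ) := by
    rw [hBdef, hg0eq]
    unfold norv
    rw [Real.sqrt_eq_rpow, ← Real.rpow_mul hg0.le]
    congr 1
    ring
  have hA : A = g 1 ^ (γ₂/2 : ℝ) := by
    rw [hAdef, hg1eq]
    unfold norv
    rw [Real.sqrt_eq_rpow, ← Real.rpow_mul hg1.le]
    congr 1
    ring
  have hkey : γ₂ * ξ.1 * J 0 + γ₂ * ξ.2 * J 1 = B - A := by
    have := hsplit.symm.trans hFTC
    rw [hA, hB]
    linarith
  have hApos : 0 < A := by
    rw [hA]; exact Real.rpow_pos_of_pos (hg1eq ▸ hg1) _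
  have hBpos : 0 < B := by
    rw [hB]; exact Real.rpow_pos_of_pos (hg0eq ▸ hg0) _
  have hAne : (A : ℂ) ≠ 0 := by exact_mod_cast hApos.ne'
  have hBne : (B : ℂ) ≠ 0 := by exact_mod_cast hBpos.ne'
  have hcl : (comp2 (ξ - η) l : ℝ) = comp2 ξ l - comp2 η l := by
    fin_cases l <;> simp [comp2]
  have hc0 : (comp2 ξ 0 : ℝ) = ξ.1 := by simp [comp2]
  have hc1 : (comp2 ξ 1 : ℝ) = ξ.2 := by simp [comp2]
  have hkeyC : (γ₂ : ℂ) * ξ.1 * (J 0 : ℂ) + (γ₂ : ℂ) * ξ.2 * (J 1 : ℂ)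
      = (B : ℂ) - (A : ℂ) := by
    exact_mod_cast congrArg (Complex.ofReal) hkey
  set e : ℂ := (comp2 η l : ℂ) with hedef
  have hterm : ∀ a c : ℂ,
      Complex.I * a * (Complex.I * e / (B:ℂ)) * (1/(A:ℂ)) * (γ₂:ℂ) * (Complex.I * c)
      = Complex.I * (-(a * e * (γ₂:ℂ) * c) / ((A:ℂ)*(B:ℂ))) := by
    intro a c
    have h2 : Complex.I * Complex.I = -1 := Complex.I_mul_I
    calc Complex.I * a * (Complex.I * e / (B:ℂ)) * (1/(A:ℂ)) * (γ₂:ℂ) * (Complex.I * c)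
        = (Complex.I * Complex.I) * (Complex.I * (a * e * (γ₂:ℂ) * c) * (B:ℂ)⁻¹ * (A:ℂ)⁻¹) := by
          ring
      _ = Complex.I * (-(a * e * (γ₂:ℂ) * c) / ((A:ℂ)*(B:ℂ))) := by
          rw [h2]; ring
  have hS : (∑ m : Fin 2, Complex.I * (comp2 ξ m : ℂ)
          * (Complex.I * e / ((B:ℝ) : ℂ))
          * (1 / ((A:ℝ) : ℂ)) * (γ₂ : ℂ) * sm γ₂ m (ξ - η) η)
      = Complex.I * e * (1/(B:ℂ) - 1/(A:ℂ)) := by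
    rw [Fin.sum_univ_two, hsm 0, hsm 1, hc0, hc1, hterm, hterm]
    have : Complex.I * (-((ξ.1:ℂ) * e * (γ₂:ℂ) * (J 0 : ℂ)) / ((A:ℂ)*(B:ℂ)))
        + Complex.I * (-((ξ.2:ℂ) * e * (γ₂:ℂ) * (J 1 : ℂ)) / ((A:ℂ)*(B:ℂ)))
        = Complex.I * e * (((A:ℂ) - (B:ℂ)) / ((A:ℂ)*(B:ℂ))) := by
      linear_combination (-(Complex.I * e) / ((A:ℂ) * (B:ℂ))) * hkeyC
    rw [this, div_sub_div _ _ hBne hAne, one_mul, mul_one, mul_comm ((B:ℂ)) ((A:ℂ))]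
  rw [hS, hcl]
  push_cast
  field_simp
  ring
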